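/- arXiv:1105.0270 — 3 statements merged into one kernel-verified Lean document; each statement's English description precedes it below -/
import Mathlib

section
/- Under Conditions A and Conditions B, with Δ = ε/10, there exists a positive integer t0 such that for every integer t ≥ t0 there is a number N0 = N0(t) > 0 with the following property: for every x ∈ V and every y ∈ 𝒴 with L2(y) ≥ N0, E_{x,y}[L2(Y^t) − L2(y)] ≤ −tΔ. -/
open MeasureTheory ProbabilityTheory Filter Set
open scoped ENNReal

noncomputable section

/-- First hitting time (at a time `≥ 1`) of a set along a trajectory, valued in `ℝ≥0∞`
(`∞` if the set is never hit). -/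
def hitTime {S : Type*} (V : Set S) (ω : ℕ → S) : ℝ≥0∞ :=
  sInf {r : ℝ≥0∞ | ∃ n : ℕ, r = n ∧ 1 ≤ n ∧ ω n ∈ V}

/-- A time-homogeneous Markov chain, given by the family of its path-space laws
`P z` (the law of the whole trajectory when started at `z`). -/
structure MarkovFamily (S : Type*) [MeasurableSpace S] where
  P : S → Measure (ℕ → S)
  prob : ∀ z, IsProbabilityMeasure (P z)
  meas : Measurable P
  start : ∀ z, P z {ω | ω 0 = z} = 1
  markov : ∀ (z : S) (n : ℕ) (B : Set (ℕ → S)),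
      MeasurableSet[MeasurableSpace.comap (fun (ω : ℕ → S) (i : Fin (n+1)) => ω i) inferInstance] B →
      ∀ A : Set (ℕ → S), MeasurableSet A →
        P z (B ∩ {ω | (fun k => ω (n + k)) ∈ A}) = ∫⁻ ω in B, P (ω n) A ∂ P z

/-- A set `D` is positive recurrent for the chain: the hitting time of `D` is a.s. finite
from every initial state, and its expectation is bounded uniformly over initial states in `D`. -/
def PosRec {S : Type*} [MeasurableSpace S] (F : MarkovFamily S) (D : Set S) : Prop :=
  (∀ z, F.P z {ω | hitTime D ω < ⊤} = 1) ∧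
  ∃ C : ℝ≥0∞, C < ⊤ ∧ ∀ z ∈ D, ∫⁻ ω, hitTime D ω ∂ F.P z ≤ C


variable {X Y : Type*} [MeasurableSpace X] [MeasurableSpace Y]

open Classical in
/-- The expected hitting time of `V` (at a time `≥ 1`), as the test function `L1`:
`L1 x = E_x τ_V` for `x ∉ V` and `L1 x = 0` for `x ∈ V`. -/
def L1fun (XC : MarkovFamily X) (V : Set X) (x : X) : ℝ≥0∞ :=
  if x ∈ V then 0 else ∫⁻ ω, hitTime V ω ∂ XC.P x

/-- Conditions A of the paper for the two-component chain `chain` on `X × Y` whose first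
component is the autonomous Markov chain `XC`:  autonomy of the `X`-component (A0), positive
recurrence of the set `V` for the `X`-chain, existence of a stationary distribution `π` for the
`X`-chain with convergence to it in total variation from every point, uniformly over `V`, and
sublinear growth of `E_x L1(X^t)` uniformly over `x ∈ V`. -/
def CondA (chain : MarkovFamily (X × Y)) (XC : MarkovFamily X) (V : Set X)
    (π : Measure X) : Prop :=
  MeasurableSet V ∧
  -- A0 : the X-component evolves autonomously, with path law `XC.P x` for any initial `y`
  (∀ x y, Measure.map (fun (ω : ℕ → X × Y) (n : ℕ) => (ω n).1) (chain.P (x, y)) = XC.P x) ∧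
  -- the hitting time of V is a.s. finite from every initial state
  (∀ x, XC.P x {ω | hitTime V ω < ⊤} = 1) ∧
  -- and its expectation is uniformly bounded on V
  (∃ s0 : ℝ≥0∞, s0 < ⊤ ∧ ∀ x ∈ V, ∫⁻ ω, hitTime V ω ∂ XC.P x ≤ s0) ∧
  -- π is a stationary distribution of the X-chain
  IsProbabilityMeasure π ∧
  (∀ B : Set X, MeasurableSet B → ∫⁻ x, XC.P x {ω | ω 1 ∈ B} ∂π = π B) ∧
  -- convergence to π in total variation from every initial state
  (∀ x, ∀ ε : ℝ, 0 < ε → ∃ T : ℕ, ∀ t ≥ T, ∀ B : Set X, MeasurableSet B →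
      |(XC.P x {ω | ω t ∈ B}).toReal - (π B).toReal| ≤ ε) ∧
  -- uniformly over x ∈ V
  (∀ ε : ℝ, 0 < ε → ∃ T : ℕ, ∀ t ≥ T, ∀ x ∈ V, ∀ B : Set X, MeasurableSet B →
      |(XC.P x {ω | ω t ∈ B}).toReal - (π B).toReal| ≤ ε) ∧
  -- (1/t) sup_{x ∈ V} E_x L1(X^t) → 0
  (∀ ε : ℝ, 0 < ε → ∃ T : ℕ, ∀ t ≥ T, ∀ x ∈ V,
      ∫⁻ ω, L1fun XC V (ω t) ∂ XC.P x ≤ ENNReal.ofReal (ε * t))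

/-- Condition B1 of the paper: the absolute increments of `L2` along the `Y`-component
have expectations bounded by `U`, uniformly in the initial state. -/
def CondB1 (chain : MarkovFamily (X × Y)) (L2 : Y → ℝ) (U : ℝ) : Prop :=
  Measurable L2 ∧ (∀ y, 0 ≤ L2 y) ∧
  ∀ (x : X) (y : Y),
    ∫⁻ ω, ENNReal.ofReal |L2 (ω 1).2 - L2 y| ∂ chain.P (x, y) ≤ ENNReal.ofReal U

/-- Condition B2 of the paper: a drift inequality
`E_{x,y}[L2(Y^1) - L2(y)] ≤ f x + h (L2 y)` with `h ↓ 0` and `∫ f dπ = -ε < 0`. -/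
def CondB2 (chain : MarkovFamily (X × Y)) (π : Measure X) (L2 : Y → ℝ)
    (h : ℝ → ℝ) (f : X → ℝ) (ε : ℝ) : Prop :=
  Antitone h ∧ (∀ r : ℝ, 0 ≤ h r) ∧ Tendsto h atTop (nhds 0) ∧
  Measurable f ∧ (∃ K : ℝ, ∀ x, |f x| ≤ K) ∧
  0 < ε ∧ (∫ x, f x ∂π = -ε) ∧
  ∀ (x : X) (y : Y),
    ∫ ω, (L2 (ω 1).2 - L2 y) ∂ chain.P (x, y) ≤ f x + h (L2 y)

end

section Aux

open MeasureTheory ProbabilityTheory Filter Set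
open scoped ENNReal

variable {S : Type*} [MeasurableSpace S]

lemma measurable_shift (n : ℕ) : Measurable (fun (ω : ℕ → S) k => ω (n + k)) :=
  measurable_pi_lambda _ fun _ => measurable_pi_apply _

lemma MarkovFamily.measurable_ker (F : MarkovFamily S) (n : ℕ) :
    Measurable (fun (ω : ℕ → S) => F.P (ω n)) :=
  F.meas.comp (measurable_pi_apply n)

lemma MarkovFamily.map_shift (F : MarkovFamily S) (z : S) (n : ℕ) :
    Measure.map (fun (ω : ℕ → S) k => ω (n + k)) (F.P z)
      = Measure.bind (F.P z) (fun ω => F.P (ω n)) := by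
  ext A hA
  rw [Measure.map_apply (measurable_shift n) hA,
    Measure.bind_apply hA (F.measurable_ker n).aemeasurable]
  have := F.markov z n Set.univ MeasurableSet.univ A hA
  rw [Measure.restrict_univ, Set.univ_inter] at this
  exact this

lemma MarkovFamily.lintegral_shift (F : MarkovFamily S) (z : S) (n : ℕ)
    {g : (ℕ → S) → ℝ≥0∞} (hg : Measurable g) :
    ∫⁻ ω, g (fun k => ω (n + k)) ∂ F.P z
      = ∫⁻ ω, (∫⁻ ω', g ω' ∂ F.P (ω n)) ∂ F.P z := by
  rw [← lintegral_map hg (measurable_shift n), F.map_shift,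
    Measure.lintegral_bind (F.measurable_ker n).aemeasurable hg.aemeasurable]

end Aux

section Aux2

open MeasureTheory ProbabilityTheory Filter Set
open scoped ENNReal

variable {S : Type*} [MeasurableSpace S]

lemma integrable_of_lint_abs {α : Type*} [MeasurableSpace α] {μ : Measure α}
    {g : α → ℝ} (hg : Measurable g) {C : ℝ≥0∞} (hC : C ≠ ⊤)
    (hb : ∫⁻ a, ENNReal.ofReal |g a| ∂μ ≤ C) : Integrable g μ := by
  refine ⟨hg.aestronglyMeasurable, ?_⟩
  rw [hasFiniteIntegral_iff_norm]
  simp only [Real.norm_eq_abs]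
  exact lt_of_le_of_lt hb hC.lt_top

lemma MarkovFamily.integral_shift (F : MarkovFamily S) (z : S) (n : ℕ)
    {g : (ℕ → S) → ℝ} (hg : Measurable g) {C : ℝ≥0∞} (hC : C ≠ ⊤)
    (hb : ∀ w, ∫⁻ ω, ENNReal.ofReal |g ω| ∂ F.P w ≤ C) :
    (∫ ω, g (fun k => ω (n + k)) ∂ F.P z
      = ∫ ω, (∫ ω', g ω' ∂ F.P (ω n)) ∂ F.P z) ∧
    Integrable (fun ω => ∫ ω', g ω' ∂ F.P (ω n)) (F.P z) := by
  have hprob := F.prob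
  set Ip : S → ℝ≥0∞ := fun w => ∫⁻ ω', ENNReal.ofReal (g ω') ∂ F.P w with hIp
  set In : S → ℝ≥0∞ := fun w => ∫⁻ ω', ENNReal.ofReal (-(g ω')) ∂ F.P w with hIn
  have hgp : Measurable fun ω' => ENNReal.ofReal (g ω') :=
    ENNReal.measurable_ofReal.comp hg
  have hgn : Measurable fun ω' => ENNReal.ofReal (-(g ω')) :=
    ENNReal.measurable_ofReal.comp hg.neg
  have hIpm : Measurable Ip := Measure.measurable_lintegral hgp |>.comp F.meas
  have hInm : Measurable In := Measure.measurable_lintegral hgn |>.comp F.meas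
  have hIpb : ∀ w, Ip w ≤ C := fun w => le_trans
    (lintegral_mono fun ω' => ENNReal.ofReal_le_ofReal (le_abs_self _)) (hb w)
  have hInb : ∀ w, In w ≤ C := fun w => le_trans
    (lintegral_mono fun ω' => ENNReal.ofReal_le_ofReal (neg_le_abs _)) (hb w)
  -- integrability of g under each F.P w
  have hint : ∀ w, Integrable g (F.P w) := fun w =>
    integrable_of_lint_abs hg hC (hb w)
  -- the inner integral as difference of toReals
  have hinner : ∀ w, ∫ ω', g ω' ∂ F.P w = (Ip w).toReal - (In w).toReal := fun w =>
    integral_eq_lintegral_pos_part_sub_lintegral_neg_part (hint w)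
  -- integrability of the toReal parts
  have hintIp : Integrable (fun ω => (Ip (ω n)).toReal) (F.P z) := by
    refine (integrable_const C.toReal).mono'
      ((hIpm.comp (measurable_pi_apply n)).ennreal_toReal).aestronglyMeasurable
      (ae_of_all _ fun ω => ?_)
    rw [Real.norm_eq_abs, abs_of_nonneg ENNReal.toReal_nonneg]
    exact ENNReal.toReal_mono hC (hIpb _)
  have hintIn : Integrable (fun ω => (In (ω n)).toReal) (F.P z) := by
    refine (integrable_const C.toReal).mono'
      ((hInm.comp (measurable_pi_apply n)).ennreal_toReal).aestronglyMeasurable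
      (ae_of_all _ fun ω => ?_)
    rw [Real.norm_eq_abs, abs_of_nonneg ENNReal.toReal_nonneg]
    exact ENNReal.toReal_mono hC (hInb _)
  constructor
  · -- integrability of g ∘ shift
    have hshift : Integrable (fun ω => g (fun k => ω (n + k))) (F.P z) := by
      refine integrable_of_lint_abs (hg.comp (measurable_shift n)) hC ?_
      have := F.lintegral_shift z n
        (g := fun ω' => ENNReal.ofReal |g ω'|)
        (ENNReal.measurable_ofReal.comp hg.abs)
      rw [this]
      calc ∫⁻ ω, (∫⁻ ω', ENNReal.ofReal |g ω'| ∂ F.P (ω n)) ∂ F.P z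
          ≤ ∫⁻ _, C ∂ F.P z := lintegral_mono fun ω => hb _
        _ = C := by rw [lintegral_const, measure_univ, mul_one]
    rw [integral_eq_lintegral_pos_part_sub_lintegral_neg_part hshift]
    have e1 : ∫⁻ ω, ENNReal.ofReal (g (fun k => ω (n + k))) ∂ F.P z
        = ∫⁻ ω, Ip (ω n) ∂ F.P z := F.lintegral_shift z n hgp
    have e2 : ∫⁻ ω, ENNReal.ofReal (-(g (fun k => ω (n + k)))) ∂ F.P z
        = ∫⁻ ω, In (ω n) ∂ F.P z := F.lintegral_shift z n hgn
    rw [e1, e2]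
    have e3 : ∫ ω, (∫ ω', g ω' ∂ F.P (ω n)) ∂ F.P z
        = ∫ ω, ((Ip (ω n)).toReal - (In (ω n)).toReal) ∂ F.P z := by
      exact integral_congr_ae (ae_of_all _ fun ω => hinner _)
    rw [e3, integral_sub hintIp hintIn]
    have e4 : ∫ ω, (Ip (ω n)).toReal ∂ F.P z = (∫⁻ ω, Ip (ω n) ∂ F.P z).toReal := by
      refine integral_toReal ((hIpm.comp (measurable_pi_apply n)).aemeasurable)
        (ae_of_all _ fun ω => lt_of_le_of_lt (hIpb _) hC.lt_top)
    have e5 : ∫ ω, (In (ω n)).toReal ∂ F.P z = (∫⁻ ω, In (ω n) ∂ F.P z).toReal := by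
      refine integral_toReal ((hInm.comp (measurable_pi_apply n)).aemeasurable)
        (ae_of_all _ fun ω => lt_of_le_of_lt (hInb _) hC.lt_top)
    rw [e4, e5]
  · refine ((hintIp.sub hintIn).congr (ae_of_all _ fun ω => ?_))
    exact (hinner _).symm

end Aux2

section Aux3

open MeasureTheory ProbabilityTheory Filter Set
open scoped ENNReal

lemma bridge_TV_integral {α : Type*} [MeasurableSpace α] (μ ν : Measure α)
    [IsProbabilityMeasure μ] [IsProbabilityMeasure ν] {f : α → ℝ} (hf : Measurable f)
    {K : ℝ} (hK0 : 0 ≤ K) (hK : ∀ a, |f a| ≤ K) {δ : ℝ} (hδ : 0 ≤ δ)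
    (hTV : ∀ B : Set α, MeasurableSet B → |(μ B).toReal - (ν B).toReal| ≤ δ) :
    |∫ a, f a ∂μ - ∫ a, f a ∂ν| ≤ 2 * K * δ := by
  set g : α → ℝ := fun a => f a + K with hg
  have hgm : Measurable g := hf.add_const K
  have hgnn : ∀ a, 0 ≤ g a := fun a => by
    have := (abs_le.1 (hK a)).1; simp [hg]; linarith
  have hgle : ∀ a, g a ≤ 2 * K := fun a => by
    have := (abs_le.1 (hK a)).2; simp [hg]; linarith
  have hgint : ∀ (ρ : Measure α) [IsProbabilityMeasure ρ], Integrable g ρ := by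
    intro ρ hρ
    refine (integrable_const (2 * K)).mono' hgm.aestronglyMeasurable
      (ae_of_all _ fun a => ?_)
    rw [Real.norm_eq_abs, abs_of_nonneg (hgnn a)]; exact hgle a
  -- layer cake representation
  set F : ℝ → ℝ := fun t => (μ {a | t < g a}).toReal with hF
  set G : ℝ → ℝ := fun t => (ν {a | t < g a}).toReal with hG
  have layF : ∫ a, g a ∂μ = ∫ t in Set.Ioi (0:ℝ), F t :=
    (hgint μ).integral_eq_integral_meas_lt (ae_of_all _ hgnn)
  have layG : ∫ a, g a ∂ν = ∫ t in Set.Ioi (0:ℝ), G t :=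
    (hgint ν).integral_eq_integral_meas_lt (ae_of_all _ hgnn)
  have hFanti : ∀ (ρ : Measure α) [IsFiniteMeasure ρ], Antitone fun t => (ρ {a | t < g a}).toReal := by
    intro ρ _
    intro s t hst
    have hsub : {a | t < g a} ⊆ {a | s < g a} := fun a ha => lt_of_le_of_lt hst ha
    exact ENNReal.toReal_mono (measure_ne_top _ _) (measure_mono hsub)
  have hzero : ∀ (ρ : Measure α), ∀ t, 2 * K ≤ t → (ρ {a | t < g a}).toReal = 0 := by
    intro ρ t ht
    have : {a | t < g a} = ∅ := by
      ext a; simp only [Set.mem_setOf_eq, Set.mem_empty_iff_false, iff_false, not_lt]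
      exact (hgle a).trans ht
    rw [this, measure_empty, ENNReal.toReal_zero]
  have hle1 : ∀ (ρ : Measure α) [IsProbabilityMeasure ρ], ∀ t,
      (ρ {a | t < g a}).toReal ≤ 1 := by
    intro ρ hρ t
    have h1 : ρ {a | t < g a} ≤ 1 := prob_le_one
    exact ENNReal.toReal_le_of_le_ofReal zero_le_one (by simpa using h1)
  have hIntOn : ∀ (ρ : Measure α) [IsProbabilityMeasure ρ],
      IntegrableOn (fun t => (ρ {a | t < g a}).toReal) (Set.Ioi (0:ℝ)) := by
    intro ρ hρ
    have hsplit : Set.Ioc (0:ℝ) (2*K) ∪ Set.Ioi (2*K) = Set.Ioi (0:ℝ) :=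
      Set.Ioc_union_Ioi_eq_Ioi (by linarith)
    rw [← hsplit]
    refine IntegrableOn.union ?_ ?_
    · refine Integrable.mono' (integrable_const 1)
        ((hFanti ρ).measurable).aestronglyMeasurable (ae_of_all _ fun t => ?_)
      rw [Real.norm_eq_abs, abs_of_nonneg ENNReal.toReal_nonneg]; exact hle1 ρ t
    · have hEq : Set.EqOn (fun t => (ρ {a | t < g a}).toReal) (fun _ => (0:ℝ))
          (Set.Ioi (2*K)) := fun t ht => hzero ρ t (le_of_lt ht)
      exact (integrableOn_congr_fun hEq measurableSet_Ioi).mpr integrableOn_zero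
  have key : ∫ a, g a ∂μ - ∫ a, g a ∂ν = ∫ t in Set.Ioi (0:ℝ), (F t - G t) := by
    rw [layF, layG, integral_sub (hIntOn μ) (hIntOn ν)]
  have hsplit : Set.Ioc (0:ℝ) (2*K) ∪ Set.Ioi (2*K) = Set.Ioi (0:ℝ) :=
    Set.Ioc_union_Ioi_eq_Ioi (by linarith)
  have hFGint : IntegrableOn (fun t => F t - G t) (Set.Ioi (0:ℝ)) :=
    (hIntOn μ).sub (hIntOn ν)
  have key2 : ∫ t in Set.Ioi (0:ℝ), (F t - G t)
      = ∫ t in Set.Ioc (0:ℝ) (2*K), (F t - G t) := by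
    rw [← hsplit, setIntegral_union (Set.Ioc_disjoint_Ioi le_rfl) measurableSet_Ioi
      (hFGint.mono_set (by rw [← hsplit]; exact Set.subset_union_left))
      (hFGint.mono_set (by rw [← hsplit]; exact Set.subset_union_right))]
    have : ∫ t in Set.Ioi (2*K), (F t - G t) = 0 := by
      rw [setIntegral_congr_fun measurableSet_Ioi
        (fun t ht => by simp [hF, hG, hzero μ t (le_of_lt ht), hzero ν t (le_of_lt ht)] :
          Set.EqOn (fun t => F t - G t) (fun _ => (0:ℝ)) (Set.Ioi (2*K)))]
      simp
    rw [this, add_zero]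
  have hbd : ‖∫ t in Set.Ioc (0:ℝ) (2*K), (F t - G t)‖ ≤ δ * (volume (Set.Ioc (0:ℝ) (2*K))).toReal := by
    refine norm_setIntegral_le_of_norm_le_const measure_Ioc_lt_top (fun t _ => ?_)
    rw [Real.norm_eq_abs]
    exact hTV _ (measurableSet_lt measurable_const hgm)
  have hvol : (volume (Set.Ioc (0:ℝ) (2*K))).toReal = 2 * K := by
    rw [Real.volume_Ioc, ENNReal.toReal_ofReal (by linarith)]; ring
  have hgμν : ∫ a, f a ∂μ - ∫ a, f a ∂ν = ∫ a, g a ∂μ - ∫ a, g a ∂ν := by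
    have hfi : ∀ (ρ : Measure α) [IsProbabilityMeasure ρ], Integrable f ρ := by
      intro ρ hρ
      refine (integrable_const K).mono' hf.aestronglyMeasurable
        (ae_of_all _ fun a => by rw [Real.norm_eq_abs]; exact hK a)
    rw [show g = fun a => f a + K from rfl]
    rw [integral_add (hfi μ) (integrable_const K), integral_add (hfi ν) (integrable_const K)]
    simp
  rw [hgμν, key, key2, ← Real.norm_eq_abs]
  calc ‖∫ t in Set.Ioc (0:ℝ) (2*K), (F t - G t)‖
      ≤ δ * (volume (Set.Ioc (0:ℝ) (2*K))).toReal := hbd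
    _ = 2 * K * δ := by rw [hvol]; ring

end Aux3


/-- **Lemma 1** (Foss–Shneer–Tyurlikov). Under Conditions A and B (with drift bound `-ε` and
`Δ = ε/10`), there is a positive integer `t0` such that for every `t ≥ t0` there is `N0 > 0`
with: for every `x ∈ V` and every `y` with `L2 y ≥ N0`,
`E_{x,y}[L2(Y^t) - L2(y)] ≤ - t Δ`. -/
theorem lemma1_drift_after_t_steps
    {X Y : Type*} [MeasurableSpace X] [MeasurableSpace Y]
    [MeasurableSpace.CountablyGenerated X] [MeasurableSpace.CountablyGenerated Y]
    (chain : MarkovFamily (X × Y)) (XC : MarkovFamily X) (V : Set X) (π : Measure X)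
    (L2 : Y → ℝ) (U : ℝ) (h : ℝ → ℝ) (f : X → ℝ) (ε : ℝ)
    (hA : CondA chain XC V π)
    (hB1 : CondB1 chain L2 U)
    (hB2 : CondB2 chain π L2 h f ε) :
    ∃ t0 : ℕ, 0 < t0 ∧ ∀ t : ℕ, t0 ≤ t → ∃ N0 : ℝ, 0 < N0 ∧
      ∀ x ∈ V, ∀ y : Y, N0 ≤ L2 y →
        ∫ ω, (L2 (ω t).2 - L2 y) ∂ chain.P (x, y) ≤ -(t : ℝ) * (ε / 10) := by
  classical
  obtain ⟨hV, hA0, -, -, hπprob, -, -, hTVu, -⟩ := hA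
  obtain ⟨hL2m, hL2nn, hU⟩ := hB1
  obtain ⟨hanti, hhnn, hh0, hfm, ⟨K, hKb⟩, hεpos, hintf, hdrift⟩ := hB2
  haveI := hπprob
  have hPI : ∀ w, IsProbabilityMeasure (chain.P w) := chain.prob
  set Δ : ℝ := ε / 10 with hΔ
  have hΔpos : 0 < Δ := by positivity
  set K' : ℝ := max K 0 with hK'
  have hK'0 : 0 ≤ K' := le_max_right _ _
  have hfb : ∀ x, |f x| ≤ K' := fun x => (hKb x).trans (le_max_left _ _)
  set Ur : ℝ := max U 0 with hUr
  have hUr0 : 0 ≤ Ur := le_max_right _ _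
  set U' : ℝ≥0∞ := ENNReal.ofReal U with hU'
  have hU'top : U' ≠ ⊤ := ENNReal.ofReal_ne_top
  have hU'toReal : U'.toReal = Ur := ENNReal.toReal_ofReal'
  -- basic measurability
  have mL2s : ∀ s : ℕ, Measurable fun (ω : ℕ → X × Y) => L2 (ω s).2 :=
    fun s => hL2m.comp (measurable_snd.comp (measurable_pi_apply s))
  have hhm : Measurable h := hanti.measurable
  have mg1 : Measurable fun (ω : ℕ → X × Y) => L2 (ω 1).2 - L2 (ω 0).2 :=
    (mL2s 1).sub (mL2s 0)
  -- a.s. the path starts where it should (as far as L2 can see)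
  have start_ae : ∀ w : X × Y, ∀ᵐ ω ∂ chain.P w, L2 (ω 0).2 = L2 w.2 := by
    intro w
    haveI := hPI w
    have hG : MeasurableSet {ω : ℕ → X × Y | L2 (ω 0).2 = L2 w.2} :=
      (mL2s 0) (measurableSet_singleton (L2 w.2))
    have hG1 : chain.P w {ω | L2 (ω 0).2 = L2 w.2} = 1 := by
      refine le_antisymm prob_le_one ?_
      rw [← chain.start w]
      exact measure_mono (fun ω hω => by
        simp only [Set.mem_setOf_eq] at hω ⊢; rw [hω])
    have : chain.P w {ω | L2 (ω 0).2 = L2 w.2}ᶜ = 0 := by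
      rw [measure_compl hG (measure_ne_top _ _), hG1, measure_univ, tsub_self]
    exact this
  -- one-step facts (transported to arbitrary starting points)
  have fact1 : ∀ w : X × Y,
      ∫⁻ ω, ENNReal.ofReal |L2 (ω 1).2 - L2 (ω 0).2| ∂ chain.P w ≤ U' := by
    intro w
    have e : ∫⁻ ω, ENNReal.ofReal |L2 (ω 1).2 - L2 (ω 0).2| ∂ chain.P w
        = ∫⁻ ω, ENNReal.ofReal |L2 (ω 1).2 - L2 w.2| ∂ chain.P w :=
      lintegral_congr_ae ((start_ae w).mono fun ω hω => by dsimp only; rw [hω])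
    rw [e]
    have := hU w.1 w.2
    rwa [Prod.mk.eta] at this
  have fact2 : ∀ w : X × Y,
      ∫ ω, (L2 (ω 1).2 - L2 (ω 0).2) ∂ chain.P w ≤ f w.1 + h (L2 w.2) := by
    intro w
    have e : ∫ ω, (L2 (ω 1).2 - L2 (ω 0).2) ∂ chain.P w
        = ∫ ω, (L2 (ω 1).2 - L2 w.2) ∂ chain.P w :=
      integral_congr_ae ((start_ae w).mono fun ω hω => by dsimp only; rw [hω])
    rw [e]
    have := hdrift w.1 w.2
    rwa [Prod.mk.eta] at this
  -- uniform convergence of E_x f(X^s) for x ∈ V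
  have hδ' : (0:ℝ) < Δ / (2 * K' + 1) := by positivity
  obtain ⟨T, hT⟩ := hTVu (Δ / (2 * K' + 1)) hδ'
  have hfT : ∀ s : ℕ, T ≤ s → ∀ x ∈ V, ∫ ω, f (ω s) ∂ XC.P x ≤ -ε + Δ := by
    intro s hs x hx
    haveI := XC.prob x
    set ρ := Measure.map (fun ω : ℕ → X => ω s) (XC.P x) with hρ
    haveI : IsProbabilityMeasure ρ :=
      Measure.isProbabilityMeasure_map (measurable_pi_apply s).aemeasurable
    have hint : ∫ a, f a ∂ρ = ∫ ω, f (ω s) ∂ XC.P x :=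
      integral_map (measurable_pi_apply s).aemeasurable hfm.aestronglyMeasurable
    have hTVρ : ∀ B : Set X, MeasurableSet B →
        |(ρ B).toReal - (π B).toReal| ≤ Δ / (2 * K' + 1) := by
      intro B hB
      rw [hρ, Measure.map_apply (measurable_pi_apply s) hB]
      exact hT s hs x hx B hB
    have hbr := bridge_TV_integral ρ π hfm hK'0 hfb (le_of_lt hδ') hTVρ
    rw [hintf, hint] at hbr
    have h2 : 2 * K' * (Δ / (2 * K' + 1)) ≤ Δ := by
      rw [mul_div_assoc']
      rw [div_le_iff₀ (by positivity)]
      nlinarith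
    have h3 := (abs_le.1 (hbr.trans h2)).2
    linarith
  -- choice of t0
  set t0 : ℕ := T + 1 + Nat.ceil ((T : ℝ) * (K' + ε) / (7 * Δ)) with ht0
  refine ⟨t0, by omega, fun t ht => ?_⟩
  have hTt : T ≤ t := by omega
  have htpos : 0 < t := by omega
  have hTrt : (T : ℝ) ≤ (t : ℝ) := by exact_mod_cast hTt
  have htbig : (T : ℝ) * (K' + ε) ≤ 7 * Δ * t := by
    have h1 : (Nat.ceil ((T : ℝ) * (K' + ε) / (7 * Δ)) : ℝ) ≤ t := by
      have : Nat.ceil ((T : ℝ) * (K' + ε) / (7 * Δ)) ≤ t := by omega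
      exact_mod_cast this
    have h2 : (T : ℝ) * (K' + ε) / (7 * Δ) ≤ t := le_trans (Nat.le_ceil _) h1
    rw [div_le_iff₀ (by positivity)] at h2
    linarith
  -- choice of N0
  obtain ⟨r0, hr0⟩ : ∃ r0 : ℝ, ∀ r, r0 ≤ r → h r < Δ / 2 := by
    have hev := hh0.eventually (gt_mem_nhds (show (0:ℝ) < Δ / 2 by positivity))
    exact eventually_atTop.1 hev
  set c : ℝ := h 0 * ((t : ℝ) * Ur) with hc
  have hc0 : 0 ≤ c := mul_nonneg (hhnn 0) (mul_nonneg (Nat.cast_nonneg t) hUr0)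
  set N0 : ℝ := max (2 * r0) (max 1 (4 * c / Δ)) with hN0
  have hN0pos : 0 < N0 :=
    lt_of_lt_of_le one_pos ((le_max_left _ _).trans (le_max_right _ _))
  refine ⟨N0, hN0pos, fun x hx y hyN => ?_⟩
  haveI := hPI (x, y)
  -- (M1) expected one-step increments along the path
  have M1 : ∀ s : ℕ,
      ∫⁻ ω, ENNReal.ofReal |L2 (ω (s+1)).2 - L2 (ω s).2| ∂ chain.P (x, y) ≤ U' := by
    intro s
    have hgm : Measurable fun (ω' : ℕ → X × Y) => ENNReal.ofReal |L2 (ω' 1).2 - L2 (ω' 0).2| :=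
      ENNReal.measurable_ofReal.comp mg1.abs
    have e := chain.lintegral_shift (x, y) s hgm
    calc ∫⁻ ω, ENNReal.ofReal |L2 (ω (s+1)).2 - L2 (ω s).2| ∂ chain.P (x, y)
        = ∫⁻ ω, (∫⁻ ω', ENNReal.ofReal |L2 (ω' 1).2 - L2 (ω' 0).2| ∂ chain.P (ω s))
            ∂ chain.P (x, y) := e
      _ ≤ ∫⁻ _, U' ∂ chain.P (x, y) := lintegral_mono fun ω => fact1 _
      _ = U' := by rw [lintegral_const, measure_univ, mul_one]
  have int1 : ∀ s : ℕ,
      Integrable (fun ω => L2 (ω (s+1)).2 - L2 (ω s).2) (chain.P (x, y)) :=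
    fun s => integrable_of_lint_abs ((mL2s (s+1)).sub (mL2s s)) hU'top (M1 s)
  -- (M3) deviation bound
  have M3 : ∀ s : ℕ,
      ∫⁻ ω, ENNReal.ofReal |L2 (ω s).2 - L2 y| ∂ chain.P (x, y) ≤ (s : ℝ≥0∞) * U' := by
    intro s
    induction s with
    | zero =>
      have e : ∫⁻ ω, ENNReal.ofReal |L2 (ω 0).2 - L2 y| ∂ chain.P (x, y)
          = ∫⁻ _, 0 ∂ chain.P (x, y) :=
        lintegral_congr_ae ((start_ae (x, y)).mono fun ω hω => by
          dsimp only
          rw [show L2 (((x, y) : X × Y)).2 = L2 y from rfl] at hω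
          rw [hω, sub_self, abs_zero, ENNReal.ofReal_zero])
      rw [e, lintegral_zero]
      simp
    | succ s ih =>
      have ptw : ∀ ω : ℕ → X × Y, ENNReal.ofReal |L2 (ω (s+1)).2 - L2 y|
          ≤ ENNReal.ofReal |L2 (ω (s+1)).2 - L2 (ω s).2|
            + ENNReal.ofReal |L2 (ω s).2 - L2 y| := fun ω =>
        le_trans (ENNReal.ofReal_le_ofReal (abs_sub_le _ _ _)) ENNReal.ofReal_add_le
      calc ∫⁻ ω, ENNReal.ofReal |L2 (ω (s+1)).2 - L2 y| ∂ chain.P (x, y)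
          ≤ ∫⁻ ω, (ENNReal.ofReal |L2 (ω (s+1)).2 - L2 (ω s).2|
              + ENNReal.ofReal |L2 (ω s).2 - L2 y|) ∂ chain.P (x, y) :=
            lintegral_mono ptw
        _ = (∫⁻ ω, ENNReal.ofReal |L2 (ω (s+1)).2 - L2 (ω s).2| ∂ chain.P (x, y))
              + ∫⁻ ω, ENNReal.ofReal |L2 (ω s).2 - L2 y| ∂ chain.P (x, y) :=
            lintegral_add_left (ENNReal.measurable_ofReal.comp ((mL2s (s+1)).sub (mL2s s)).abs) _
        _ ≤ U' + (s : ℝ≥0∞) * U' := add_le_add (M1 s) ih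
        _ = ((s + 1 : ℕ) : ℝ≥0∞) * U' := by push_cast; ring
  -- (M5) bound for the h-terms
  have M5 : ∀ s : ℕ, ∫ ω, h (L2 (ω s).2) ∂ chain.P (x, y)
      ≤ h (N0 / 2) + h 0 * (((s : ℝ) * Ur) / (N0 / 2)) := by
    intro s
    set A : Set (ℕ → X × Y) := {ω | L2 (ω s).2 ≤ N0 / 2} with hA
    have hAm : MeasurableSet A := measurableSet_le (mL2s s) measurable_const
    have ptw : ∀ ω, h (L2 (ω s).2) ≤ h (N0 / 2) + A.indicator (fun _ => h 0) ω := by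
      intro ω
      by_cases hω : ω ∈ A
      · rw [Set.indicator_of_mem hω]
        have h1 : h (L2 (ω s).2) ≤ h 0 := hanti (hL2nn _)
        have h2 : 0 ≤ h (N0 / 2) := hhnn _
        linarith
      · rw [Set.indicator_of_notMem hω, add_zero]
        exact hanti (le_of_not_ge hω)
    have hint1 : Integrable (fun ω => h (L2 (ω s).2)) (chain.P (x, y)) := by
      refine (integrable_const (h 0)).mono' (hhm.comp (mL2s s)).aestronglyMeasurable
        (ae_of_all _ fun ω => ?_)
      rw [Real.norm_eq_abs, abs_of_nonneg (hhnn _)]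
      exact hanti (hL2nn _)
    have hind : Integrable (A.indicator fun _ => h 0) (chain.P (x, y)) :=
      (integrable_const (h 0)).indicator hAm
    have step1 := integral_mono hint1 ((integrable_const (h (N0/2))).add hind) ptw
    simp only [Pi.add_apply] at step1
    rw [integral_add (integrable_const _) hind, integral_const,
      integral_indicator_const _ hAm] at step1
    simp only [Measure.real, measure_univ, ENNReal.toReal_one, one_smul, smul_eq_mul, one_mul] at step1
    -- Markov inequality for the bad set
    have hmark : chain.P (x, y) A ≤ ((s : ℝ≥0∞) * U') / ENNReal.ofReal (N0 / 2) := by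
      have hsub : A ⊆ {ω | ENNReal.ofReal (N0 / 2) ≤ ENNReal.ofReal |L2 (ω s).2 - L2 y|} := by
        intro ω hω
        simp only [hA, Set.mem_setOf_eq] at hω ⊢
        apply ENNReal.ofReal_le_ofReal
        have h1 : N0 / 2 ≤ L2 y - L2 (ω s).2 := by linarith
        calc N0 / 2 ≤ L2 y - L2 (ω s).2 := h1
          _ = -(L2 (ω s).2 - L2 y) := by ring
          _ ≤ |L2 (ω s).2 - L2 y| := neg_le_abs _
      calc chain.P (x, y) A
          ≤ chain.P (x, y) {ω | ENNReal.ofReal (N0 / 2) ≤ ENNReal.ofReal |L2 (ω s).2 - L2 y|} :=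
            measure_mono hsub
        _ ≤ (∫⁻ ω, ENNReal.ofReal |L2 (ω s).2 - L2 y| ∂ chain.P (x, y))
              / ENNReal.ofReal (N0 / 2) :=
            meas_ge_le_lintegral_div
              (ENNReal.measurable_ofReal.comp ((mL2s s).sub measurable_const).abs).aemeasurable
              (by simp only [ne_eq, ENNReal.ofReal_eq_zero, not_le]; positivity) ENNReal.ofReal_ne_top
        _ ≤ ((s : ℝ≥0∞) * U') / ENNReal.ofReal (N0 / 2) :=
            ENNReal.div_le_div_right (M3 s) _
    have htoReal : (chain.P (x, y) A).toReal ≤ ((s : ℝ) * Ur) / (N0 / 2) := by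
      have hne : ((s : ℝ≥0∞) * U') / ENNReal.ofReal (N0 / 2) ≠ ⊤ := by
        refine (ENNReal.div_lt_top ?_ ?_).ne
        · exact ENNReal.mul_ne_top (ENNReal.natCast_ne_top s) hU'top
        · simp only [ne_eq, ENNReal.ofReal_eq_zero, not_le]; positivity
      have h1 := ENNReal.toReal_mono hne hmark
      rwa [ENNReal.toReal_div, ENNReal.toReal_mul, ENNReal.toReal_natCast, hU'toReal,
        ENNReal.toReal_ofReal (by positivity)] at h1
    have h2 : (chain.P (x, y) A).toReal * h 0 ≤ h 0 * (((s : ℝ) * Ur) / (N0 / 2)) := by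
      rw [mul_comm]
      exact mul_le_mul_of_nonneg_left htoReal (hhnn 0)
    linarith
  -- (M6) the f-terms only depend on the X-component
  have M6 : ∀ s : ℕ, ∫ ω, f ((ω s).1) ∂ chain.P (x, y) = ∫ ω, f (ω s) ∂ XC.P x := by
    intro s
    have mproj : Measurable fun (ω : ℕ → X × Y) (n : ℕ) => (ω n).1 :=
      measurable_pi_lambda _ fun n => measurable_fst.comp (measurable_pi_apply n)
    have e := integral_map (μ := chain.P (x, y)) (φ := fun ω n => (ω n).1)
      (f := fun ωx => f (ωx s)) mproj.aemeasurable
      (hfm.comp (measurable_pi_apply s)).aestronglyMeasurable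
    rw [hA0 x y] at e
    exact e.symm
  -- (M2) drift bound for each step
  have M2 : ∀ s : ℕ, ∫ ω, (L2 (ω (s+1)).2 - L2 (ω s).2) ∂ chain.P (x, y)
      ≤ (∫ ω, f ((ω s).1) ∂ chain.P (x, y)) + ∫ ω, h (L2 (ω s).2) ∂ chain.P (x, y) := by
    intro s
    obtain ⟨heq, hintd⟩ := chain.integral_shift (x, y) s mg1 hU'top fact1
    have hintf' : Integrable (fun ω => f ((ω s).1)) (chain.P (x, y)) := by
      refine (integrable_const K').mono'
        ((hfm.comp (measurable_fst.comp (measurable_pi_apply s)))).aestronglyMeasurable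
        (ae_of_all _ fun ω => ?_)
      rw [Real.norm_eq_abs]; exact hfb _
    have hinth : Integrable (fun ω => h (L2 (ω s).2)) (chain.P (x, y)) := by
      refine (integrable_const (h 0)).mono' (hhm.comp (mL2s s)).aestronglyMeasurable
        (ae_of_all _ fun ω => ?_)
      rw [Real.norm_eq_abs, abs_of_nonneg (hhnn _)]
      exact hanti (hL2nn _)
    calc ∫ ω, (L2 (ω (s+1)).2 - L2 (ω s).2) ∂ chain.P (x, y)
        = ∫ ω, (∫ ω', (L2 (ω' 1).2 - L2 (ω' 0).2) ∂ chain.P (ω s)) ∂ chain.P (x, y) := heq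
      _ ≤ ∫ ω, (f ((ω s).1) + h (L2 (ω s).2)) ∂ chain.P (x, y) :=
          integral_mono hintd (hintf'.add hinth) (fun ω => fact2 _)
      _ = _ := integral_add hintf' hinth
  -- (M4) telescoping
  have M4 : ∫ ω, (L2 (ω t).2 - L2 y) ∂ chain.P (x, y)
      = ∑ s ∈ Finset.range t, ∫ ω, (L2 (ω (s+1)).2 - L2 (ω s).2) ∂ chain.P (x, y) := by
    have e1 : ∫ ω, (L2 (ω t).2 - L2 y) ∂ chain.P (x, y)
        = ∫ ω, (∑ s ∈ Finset.range t, (L2 (ω (s+1)).2 - L2 (ω s).2)) ∂ chain.P (x, y) := by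
      refine integral_congr_ae ((start_ae (x, y)).mono fun ω hω => ?_)
      dsimp only
      rw [Finset.sum_range_sub (fun i => L2 (ω i).2)]
      rw [show L2 (((x, y) : X × Y)).2 = L2 y from rfl] at hω
      rw [hω]
    rw [e1, integral_finset_sum _ (fun s _ => int1 s)]
  -- bound for the sum of f-terms
  have hFs_le : ∀ s : ℕ, ∫ ω, f ((ω s).1) ∂ chain.P (x, y) ≤ K' := by
    intro s
    have hb := norm_integral_le_of_norm_le_const (μ := chain.P (x, y))
      (f := fun ω => f ((ω s).1)) (C := K')
      (ae_of_all _ fun ω => by rw [Real.norm_eq_abs]; exact hfb _)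
    rw [Measure.real, measure_univ, ENNReal.toReal_one, mul_one, Real.norm_eq_abs] at hb
    linarith [(abs_le.1 hb).2]
  have hFs_late : ∀ s : ℕ, T ≤ s → ∫ ω, f ((ω s).1) ∂ chain.P (x, y) ≤ -ε + Δ := by
    intro s hs
    rw [M6 s]
    exact hfT s hs x hx
  have sumF : ∑ s ∈ Finset.range t, ∫ ω, f ((ω s).1) ∂ chain.P (x, y)
      ≤ (T : ℝ) * K' + ((t : ℝ) - T) * (-ε + Δ) := by
    rw [← Finset.sum_range_add_sum_Ico _ hTt]
    have b1 : ∑ s ∈ Finset.range T, ∫ ω, f ((ω s).1) ∂ chain.P (x, y) ≤ (T : ℝ) * K' := by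
      calc ∑ s ∈ Finset.range T, ∫ ω, f ((ω s).1) ∂ chain.P (x, y)
          ≤ ∑ _s ∈ Finset.range T, K' := Finset.sum_le_sum fun s _ => hFs_le s
        _ = (T : ℝ) * K' := by rw [Finset.sum_const, Finset.card_range, nsmul_eq_mul]
    have b2 : ∑ s ∈ Finset.Ico T t, ∫ ω, f ((ω s).1) ∂ chain.P (x, y)
        ≤ ((t : ℝ) - T) * (-ε + Δ) := by
      calc ∑ s ∈ Finset.Ico T t, ∫ ω, f ((ω s).1) ∂ chain.P (x, y)
          ≤ ∑ _s ∈ Finset.Ico T t, (-ε + Δ) :=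
            Finset.sum_le_sum fun s hs => hFs_late s (Finset.mem_Ico.1 hs).1
        _ = ((t - T : ℕ) : ℝ) * (-ε + Δ) := by
            rw [Finset.sum_const, Nat.card_Ico, nsmul_eq_mul]
        _ = ((t : ℝ) - T) * (-ε + Δ) := by
            rw [Nat.cast_sub hTt]
    linarith
  -- bound for the sum of h-terms
  have sumH : ∑ s ∈ Finset.range t, ∫ ω, h (L2 (ω s).2) ∂ chain.P (x, y) ≤ (t : ℝ) * Δ := by
    have hHs : ∀ s : ℕ, s < t → ∫ ω, h (L2 (ω s).2) ∂ chain.P (x, y) ≤ Δ := by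
      intro s hst
      have hM5 := M5 s
      have e1 : h (N0 / 2) ≤ Δ / 2 := by
        have h2r0 : 2 * r0 ≤ N0 := le_max_left _ _
        exact le_of_lt (hr0 (N0 / 2) (by linarith))
      have e2 : h 0 * (((s : ℝ) * Ur) / (N0 / 2)) ≤ Δ / 2 := by
        have hst' : (s : ℝ) ≤ t := by exact_mod_cast le_of_lt hst
        have hs1 : h 0 * (((s : ℝ) * Ur) / (N0 / 2)) ≤ h 0 * (((t : ℝ) * Ur) / (N0 / 2)) := by
          gcongr
          exact hhnn 0
        have hceq : h 0 * (((t : ℝ) * Ur) / (N0 / 2)) = 2 * c / N0 := by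
          field_simp [hc]
          ring
        have h4c : 4 * c / Δ ≤ N0 := (le_max_right _ _).trans (le_max_right _ _)
        have h4c' : 4 * c ≤ Δ * N0 := by
          rw [div_le_iff₀ hΔpos] at h4c; linarith
        have : 2 * c / N0 ≤ Δ / 2 := by
          rw [div_le_div_iff₀ hN0pos (by norm_num : (0:ℝ) < 2)]
          linarith
        linarith [hs1, hceq ▸ this]
      linarith
    calc ∑ s ∈ Finset.range t, ∫ ω, h (L2 (ω s).2) ∂ chain.P (x, y)
        ≤ ∑ _s ∈ Finset.range t, Δ :=
          Finset.sum_le_sum fun s hs => hHs s (Finset.mem_range.1 hs)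
      _ = (t : ℝ) * Δ := by rw [Finset.sum_const, Finset.card_range, nsmul_eq_mul]
  -- assembly
  have main : ∫ ω, (L2 (ω t).2 - L2 y) ∂ chain.P (x, y)
      ≤ ((T : ℝ) * K' + ((t : ℝ) - T) * (-ε + Δ)) + (t : ℝ) * Δ := by
    rw [M4]
    calc ∑ s ∈ Finset.range t, ∫ ω, (L2 (ω (s+1)).2 - L2 (ω s).2) ∂ chain.P (x, y)
        ≤ ∑ s ∈ Finset.range t, ((∫ ω, f ((ω s).1) ∂ chain.P (x, y))
            + ∫ ω, h (L2 (ω s).2) ∂ chain.P (x, y)) :=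
          Finset.sum_le_sum fun s _ => M2 s
      _ = (∑ s ∈ Finset.range t, ∫ ω, f ((ω s).1) ∂ chain.P (x, y))
            + ∑ s ∈ Finset.range t, ∫ ω, h (L2 (ω s).2) ∂ chain.P (x, y) :=
          Finset.sum_add_distrib
      _ ≤ _ := add_le_add sumF sumH
  have hεΔ : ε = 10 * Δ := by rw [hΔ]; ring
  calc ∫ ω, (L2 (ω t).2 - L2 y) ∂ chain.P (x, y)
      ≤ ((T : ℝ) * K' + ((t : ℝ) - T) * (-ε + Δ)) + (t : ℝ) * Δ := main
    _ ≤ -(t : ℝ) * Δ := by nlinarith [hΔpos, hTrt, hK'0, htbig, Nat.cast_nonneg (α := ℝ) T]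
end

section
/- In the ALOHA model with MAC-coordinator, couple the original green queues G with the dominating green queues G̃ by using the same driving sequences (ξ_i^t, η_i^t, α_i^t) and the same red queues R_i^t, where the dominating dynamics are: for i ≠ i(t), G̃_i^{t+1} = G̃_i^t + η_i^t − γ̃_i^t·∏_{j≠i, j≠i(t)}(1−α_j^t)·(1 − α_{i(t)}^t·1{R_{i(t)}^t = 0}), and for i = i(t), G̃_i^{t+1} = G̃_i^t + η_i^t − 1{R_i^t = 0}·γ̃_i^t·∏_{j≠i}(1−α_j^t), with γ̃_j^t = α_j^t·1{G̃_j^t > 0} (stations with empty green queues send interfering dummy packets with probability p). If G_i^1 = G̃_i^1 for all i = 1,…,M, then almost surely G_i^t ≤ G̃_i^t for all i and all t ≥ 1. -/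
open MeasureTheory ProbabilityTheory Filter Set
open scoped ENNReal

noncomputable section

/-- The driving randomness of the slotted-time ALOHA models with `M` stations:
per-station red arrivals `ξ t`, per-station green arrivals `η t` and transmission decisions
`α t` in each slot `t`.  The slots are i.i.d., within a slot the red arrivals, green arrivals
and decisions are mutually independent, the decisions are i.i.d. Bernoulli(`p`), and the
per-station arrivals are obtained from the totals (of means `lamR`, `lamG`) by independent
uniform routing (a multinomial split). -/
structure AlohaDrivers (M : ℕ) (p lamR lamG : ℝ)
    (Ω : Type*) [MeasurableSpace Ω] (μ : Measure Ω) where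
  ξ : ℕ → Ω → Fin M → ℕ
  η : ℕ → Ω → Fin M → ℕ
  α : ℕ → Ω → Fin M → Bool
  meas_ξ : ∀ t, Measurable (ξ t)
  meas_η : ∀ t, Measurable (η t)
  meas_α : ∀ t, Measurable (α t)
  /-- the driving variables of distinct slots are mutually independent -/
  indep : iIndepFun
    (fun t ω => (ξ t ω, η t ω, α t ω)) μ
  /-- the slots are identically distributed -/
  ident : ∀ t, Measure.map (fun ω => (ξ t ω, η t ω, α t ω)) μ
    = Measure.map (fun ω => (ξ 0 ω, η 0 ω, α 0 ω)) μ
  /-- within a slot, arrivals and decisions are mutually independent -/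
  slot_indep : ∀ t, Measure.map (fun ω => (ξ t ω, η t ω, α t ω)) μ
    = (Measure.map (ξ t) μ).prod ((Measure.map (η t) μ).prod (Measure.map (α t) μ))
  /-- the decisions are i.i.d. Bernoulli(p) across stations -/
  alpha_law : ∀ t (b : Fin M → Bool),
    μ {ω | α t ω = b} = ENNReal.ofReal (∏ i, if b i then p else 1 - p)
  /-- red messages are routed independently and uniformly among the stations -/
  red_routing : ∀ t (k : Fin M → ℕ),
    μ {ω | ξ t ω = k} = μ {ω | ∑ i, ξ t ω i = ∑ i, k i}
      * ENNReal.ofReal ((Nat.multinomial Finset.univ k : ℝ) * (1 / M) ^ (∑ i, k i))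
  /-- green messages are routed independently and uniformly among the stations -/
  green_routing : ∀ t (k : Fin M → ℕ),
    μ {ω | η t ω = k} = μ {ω | ∑ i, η t ω i = ∑ i, k i}
      * ENNReal.ofReal ((Nat.multinomial Finset.univ k : ℝ) * (1 / M) ^ (∑ i, k i))
  /-- the total red arrival rate is `lamR` -/
  red_mean : ∫⁻ ω, ((∑ i, ξ 0 ω i : ℕ) : ℝ≥0∞) ∂μ = ENNReal.ofReal lamR
  /-- the total green arrival rate is `lamG` -/
  green_mean : ∫⁻ ω, ((∑ i, η 0 ω i : ℕ) : ℝ≥0∞) ∂μ = ENNReal.ofReal lamG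

/-- The station scheduled to transmit a red message in slot `t` (round-robin schedule). -/
def sched (M : ℕ) [NeZero M] (t : ℕ) : Fin M :=
  ⟨t % M, Nat.mod_lt t (Nat.pos_of_ne_zero (NeZero.ne M))⟩

open Classical in
/-- The indicator that station `j` attempts a green transmission: it equals `1` iff the
decision variable is on and the green queue of `j` is nonempty. -/
def gammaInd {M : ℕ} (g : Fin M → ℕ) (a : Fin M → Bool) (j : Fin M) : ℕ :=
  if a j = true ∧ 0 < g j then 1 else 0

open Classical in
/-- In the model **with** MAC-coordinator: the indicator that station `i` successfully
transmits a green message in a slot whose scheduled station is `s`, given red queues `r`,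
green queues `g` and decisions `a`. -/
def greenSubC {M : ℕ} (s i : Fin M) (r g : Fin M → ℕ) (a : Fin M → Bool) : ℕ :=
  if i = s then
    (if r s = 0 then 1 else 0) * gammaInd g a s *
      ∏ j ∈ Finset.univ.erase s, (1 - gammaInd g a j)
  else
    gammaInd g a i * (∏ j ∈ (Finset.univ.erase i).erase s, (1 - gammaInd g a j)) *
      (1 - gammaInd g a s * (if r s = 0 then 1 else 0))

open Classical in
/-- The state process (red queues, green queues) of the ALOHA model **with**
MAC-coordinator, started from `init`. -/
def procC {M : ℕ} [NeZero M] {p lamR lamG : ℝ} {Ω : Type*} [MeasurableSpace Ω]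
    {μ : Measure Ω} (d : AlohaDrivers M p lamR lamG Ω μ)
    (init : (Fin M → ℕ) × (Fin M → ℕ)) : ℕ → Ω → (Fin M → ℕ) × (Fin M → ℕ)
  | 0, _ => init
  | t + 1, ω =>
    let st := procC d init t ω
    let s := sched M t
    (fun i => st.1 i + d.ξ t ω i - (if i = s ∧ 0 < st.1 i then 1 else 0),
     fun i => st.2 i + d.η t ω i - greenSubC s i st.1 st.2 (d.α t ω))

open Classical in
/-- The success indicator of the **dominating** system: stations with empty green queues also
send interfering dummy packets (with probability `p`), i.e. the interference terms use the raw
decisions `a j` instead of `γ̃ j`. -/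
def greenSubTilde {M : ℕ} (s i : Fin M) (r gt : Fin M → ℕ) (a : Fin M → Bool) : ℕ :=
  if i = s then
    (if r s = 0 then 1 else 0) * gammaInd gt a s *
      ∏ j ∈ Finset.univ.erase s, (1 - if a j then 1 else 0)
  else
    gammaInd gt a i * (∏ j ∈ (Finset.univ.erase i).erase s, (1 - if a j then 1 else 0)) *
      (1 - (if a s then 1 else 0) * (if r s = 0 then 1 else 0))

open Classical in
/-- The coupled process `(R, G, G̃)` of the ALOHA model with MAC-coordinator together with its
dominating system, driven by the same arrivals, decisions, and red queues. -/
def procDom {M : ℕ} [NeZero M] {p lamR lamG : ℝ} {Ω : Type*} [MeasurableSpace Ω]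
    {μ : Measure Ω} (d : AlohaDrivers M p lamR lamG Ω μ)
    (init : (Fin M → ℕ) × (Fin M → ℕ) × (Fin M → ℕ)) :
    ℕ → Ω → (Fin M → ℕ) × (Fin M → ℕ) × (Fin M → ℕ)
  | 0, _ => init
  | t + 1, ω =>
    let st := procDom d init t ω
    let s := sched M t
    (fun i => st.1 i + d.ξ t ω i - (if i = s ∧ 0 < st.1 i then 1 else 0),
     fun i => st.2.1 i + d.η t ω i - greenSubC s i st.1 st.2.1 (d.α t ω),
     fun i => st.2.2 i + d.η t ω i - greenSubTilde s i st.1 st.2.2 (d.α t ω))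

end

open Classical in
lemma gammaInd_le_ite {M : ℕ} (g : Fin M → ℕ) (a : Fin M → Bool) (j : Fin M) :
    gammaInd g a j ≤ if a j then 1 else 0 := by
  unfold gammaInd; split_ifs <;> simp_all

open Classical in
lemma tilde_le_C {M : ℕ} (s i : Fin M) (r g gt : Fin M → ℕ) (a : Fin M → Bool)
    (hi : g i = gt i) :
    greenSubTilde s i r gt a ≤ greenSubC s i r g a := by
  have hfac : ∀ j, (1 - if a j then 1 else 0) ≤ 1 - gammaInd g a j := fun j =>
    Nat.sub_le_sub_left (gammaInd_le_ite g a j) 1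
  have hgi : gammaInd gt a i = gammaInd g a i := by unfold gammaInd; rw [hi]
  unfold greenSubTilde greenSubC
  by_cases h : i = s
  · rw [if_pos h, if_pos h]
    subst h
    rw [hgi]
    exact Nat.mul_le_mul le_rfl (Finset.prod_le_prod' fun j _ => hfac j)
  · rw [if_neg h, if_neg h]
    refine Nat.mul_le_mul (Nat.mul_le_mul hgi.le
      (Finset.prod_le_prod' fun j _ => hfac j)) ?_
    exact Nat.sub_le_sub_left (Nat.mul_le_mul (gammaInd_le_ite g a s) le_rfl) 1

open Classical in
lemma greenSubTilde_le_one {M : ℕ} (s i : Fin M) (r gt : Fin M → ℕ) (a : Fin M → Bool) :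
    greenSubTilde s i r gt a ≤ 1 := by
  have hg : ∀ j, gammaInd gt a j ≤ 1 := by
    intro j; unfold gammaInd; split_ifs <;> omega
  have hprod : ∀ (T : Finset (Fin M)), (∏ j ∈ T, (1 - if a j then 1 else 0)) ≤ 1 :=
    fun T => Finset.prod_le_one (fun j _ => Nat.zero_le _)
      (fun j _ => by split_ifs <;> omega)
  unfold greenSubTilde
  by_cases h : i = s
  · rw [if_pos h]
    calc _ ≤ 1 * 1 * 1 :=
          Nat.mul_le_mul (Nat.mul_le_mul (by split_ifs <;> omega) (hg s)) (hprod _)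
      _ = 1 := by norm_num
  · rw [if_neg h]
    calc _ ≤ 1 * 1 * 1 :=
          Nat.mul_le_mul (Nat.mul_le_mul (hg i) (hprod _)) (Nat.sub_le _ _)
      _ = 1 := by norm_num

/-- **The domination coupling** used in the proof of Theorem 3: if the original green queues
and the dominating green queues (of the system in which stations with empty green queues send
interfering dummy packets) start from the same state and are driven by the same arrivals,
decisions and red queues, then almost surely `G_i^t ≤ G̃_i^t` for all stations `i` and all
times `t`. -/
theorem aloha_domination_coupling
    {M : ℕ} [NeZero M] {p lamR lamG : ℝ} (hp0 : 0 < p) (hp1 : p < 1)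
    {Ω : Type*} [MeasurableSpace Ω] {μ : Measure Ω} [IsProbabilityMeasure μ]
    (d : AlohaDrivers M p lamR lamG Ω μ)
    (init : (Fin M → ℕ) × (Fin M → ℕ) × (Fin M → ℕ))
    (hinit : init.2.1 = init.2.2) :
    ∀ᵐ ω ∂μ, ∀ (t : ℕ) (i : Fin M),
      (procDom d init t ω).2.1 i ≤ (procDom d init t ω).2.2 i := by
  refine ae_of_all μ fun ω t => ?_
  induction t with
  | zero => intro i; simp [procDom, hinit]
  | succ t ih =>
    intro i
    simp only [procDom]
    rcases eq_or_lt_of_le (ih i) with hi | hi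
    · exact tsub_le_tsub (Nat.add_le_add_right hi.le _)
        (tilde_le_C _ _ _ _ _ _ hi)
    · have h1 := greenSubTilde_le_one (sched M t) i (procDom d init t ω).1
        (procDom d init t ω).2.2 (d.α t ω)
      omega
end

section
/- Let {W^t} be a time-homogeneous Markov chain on a measurable space (𝒮,ℬ), let L: 𝒮 → [0,∞) be measurable, and let D = {w ∈ 𝒮 : L(w) ≤ N} for some N > 0. Suppose there exists a measurable positive-integer-valued function T on 𝒮 such that sup_{w} T(w)/max(1, L(w)) < ∞, sup_{w∈D} E_w[L(W^{T(w)})] < ∞, and E_w[L(W^{T(w)})] − L(w) ≤ −c·T(w) for some constant c > 0 and all w ∉ D. Then D is positive recurrent for {W^t}: τ_D := min{t ≥ 1 : W^t ∈ D} is P_w-a.s. finite for every w ∈ 𝒮 and sup_{w∈D} E_w[τ_D] < ∞. -/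
open MeasureTheory ProbabilityTheory Filter Set
open scoped ENNReal

noncomputable section FosterAux

variable {S : Type*} [MeasurableSpace S]

/-- Sampled/stopped time sequence: `sfun k` is the time of the `k+1`-st sample,
frozen once the sampled state enters `{L ≤ N}`. -/
def sfun (L : S → ℝ) (N : ℝ) (T : S → ℕ) : ℕ → (ℕ → S) → ℕ
  | 0, ω => T (ω 0)
  | (k+1), ω =>
      if L (ω (sfun L N T k ω)) ≤ N then sfun L N T k ω
      else sfun L N T k ω + T (ω (sfun L N T k ω))

lemma measurable_eval_comp {f : (ℕ → S) → ℕ} (hf : Measurable f) :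
    Measurable fun ω : ℕ → S => ω (f ω) := by
  intro B hB
  have : (fun ω : ℕ → S => ω (f ω)) ⁻¹' B
      = ⋃ n : ℕ, {ω : ℕ → S | f ω = n} ∩ (fun ω : ℕ → S => ω n) ⁻¹' B := by
    ext ω; simp only [Set.mem_preimage, Set.mem_iUnion, Set.mem_inter_iff, Set.mem_setOf_eq]
    constructor
    · intro h; exact ⟨f ω, rfl, h⟩
    · rintro ⟨n, rfl, h⟩; exact h
  rw [this]
  exact MeasurableSet.iUnion fun n =>
    (hf (measurableSet_singleton n)).inter ((measurable_pi_apply n) hB)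

lemma sfun_measurable {L : S → ℝ} {N : ℝ} {T : S → ℕ} (hL : Measurable L)
    (hT : Measurable T) : ∀ k, Measurable (sfun L N T k) := by
  intro k
  induction k with
  | zero => exact hT.comp (measurable_pi_apply 0)
  | succ k ih =>
      have he : Measurable fun ω : ℕ → S => ω (sfun L N T k ω) := measurable_eval_comp ih
      exact Measurable.ite ((hL.comp he) measurableSet_Iic) ih (ih.add (hT.comp he))

/-- The σ-algebra generated by the first `n+1` coordinates. -/
def Fn (S : Type*) [MeasurableSpace S] (n : ℕ) : MeasurableSpace (ℕ → S) :=
  MeasurableSpace.comap (fun (ω : ℕ → S) (i : Fin (n+1)) => ω i) inferInstance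

lemma Fn_le (n : ℕ) : Fn S n ≤ (inferInstance : MeasurableSpace (ℕ → S)) :=
  (measurable_pi_lambda (fun (ω : ℕ → S) (i : Fin (n+1)) => ω i)
    fun i => measurable_pi_apply (i : ℕ)).comap_le

lemma coord_mem_Fn {m n : ℕ} (h : m ≤ n) {B : Set S} (hB : MeasurableSet B) :
    MeasurableSet[Fn S n] {ω : ℕ → S | ω m ∈ B} := by
  refine ⟨(fun x : Fin (n+1) → S => x ⟨m, Nat.lt_succ_of_le h⟩) ⁻¹' B,
    (measurable_pi_apply _) hB, rfl⟩

lemma Fn_mono {m n : ℕ} (h : m ≤ n) : Fn S m ≤ Fn S n := by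
  intro s hs
  obtain ⟨t, ht, rfl⟩ := hs
  refine ⟨(fun x : Fin (n+1) → S => fun i : Fin (m+1) => x (Fin.castLE (by omega) i)) ⁻¹' t,
    (measurable_pi_lambda _ fun i => measurable_pi_apply _) ht, rfl⟩

lemma sfun_mem_Fn {L : S → ℝ} {N : ℝ} {T : S → ℕ} (hL : Measurable L) (hT : Measurable T) :
    ∀ k n : ℕ, MeasurableSet[Fn S n] {ω : ℕ → S | sfun L N T k ω = n} := by
  intro k
  induction k with
  | zero =>
      intro n
      exact coord_mem_Fn (Nat.zero_le n) (hT (measurableSet_singleton n))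
  | succ k ih =>
      intro n
      have hdecomp : {ω : ℕ → S | sfun L N T (k+1) ω = n}
          = ({ω : ℕ → S | sfun L N T k ω = n} ∩ {ω : ℕ → S | ω n ∈ {x | L x ≤ N}})
            ∪ ⋃ m : ℕ, ⋃ _ : m ≤ n,
              ({ω : ℕ → S | sfun L N T k ω = m} ∩ {ω : ℕ → S | ω m ∈ {x | L x ≤ N}ᶜ}
                ∩ {ω : ℕ → S | ω m ∈ T ⁻¹' {j | m + j = n}}) := by
        ext ω
        simp only [Set.mem_union, Set.mem_inter_iff, Set.mem_setOf_eq, Set.mem_iUnion,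
          Set.mem_compl_iff, Set.mem_preimage, sfun]
        constructor
        · intro hω
          by_cases hc : L (ω (sfun L N T k ω)) ≤ N
          · left
            rw [if_pos hc] at hω
            exact ⟨hω, by rwa [hω] at hc⟩
          · right
            rw [if_neg hc] at hω
            exact ⟨sfun L N T k ω, by omega, ⟨rfl, hc⟩, hω⟩
        · rintro (⟨h1, h2⟩ | ⟨m, hmn, ⟨h1, h2⟩, h3⟩)
          · have h2' : L (ω (sfun L N T k ω)) ≤ N := by rw [h1]; exact h2
            rw [if_pos h2', h1]
          · have h2' : ¬ L (ω (sfun L N T k ω)) ≤ N := by rw [h1]; exact h2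
            rw [if_neg h2', h1]; exact h3
      rw [hdecomp]
      refine ((ih n).inter (coord_mem_Fn le_rfl (hL measurableSet_Iic))).union
        (MeasurableSet.iUnion fun m => MeasurableSet.iUnion fun hmn =>
          ((Fn_mono hmn _ (ih m)).inter
            (coord_mem_Fn hmn (hL measurableSet_Iic).compl)).inter
            (coord_mem_Fn hmn (hT (Set.to_countable _).measurableSet)))

lemma markov_lintegral (F : MarkovFamily S) (z : S) (n : ℕ) {B : Set (ℕ → S)}
    (hB : MeasurableSet[Fn S n] B) {g : (ℕ → S) → ℝ≥0∞} (hg : Measurable g) :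
    ∫⁻ ω in B, g (fun k => ω (n + k)) ∂ F.P z
      = ∫⁻ ω in B, ∫⁻ η, g η ∂ F.P (ω n) ∂ F.P z := by
  have hBm : MeasurableSet B := Fn_le n _ hB
  have hshift : Measurable (fun ω : ℕ → S => fun k => ω (n + k)) :=
    measurable_pi_lambda _ fun k => measurable_pi_apply _
  have key : ((F.P z).restrict B).map (fun ω : ℕ → S => fun k => ω (n + k))
      = (((F.P z).restrict B).map (fun ω : ℕ → S => ω n)).bind F.P := by
    ext A hA
    rw [Measure.map_apply hshift hA, Measure.restrict_apply (hshift hA), Set.inter_comm,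
      Measure.bind_apply hA F.meas.aemeasurable,
      lintegral_map (show Measurable fun x : S => F.P x A from
        (Measure.measurable_coe hA).comp F.meas) (measurable_pi_apply n)]
    exact F.markov z n B hB A hA
  calc ∫⁻ ω in B, g (fun k => ω (n + k)) ∂ F.P z
      = ∫⁻ η, g η ∂ (((F.P z).restrict B).map (fun ω : ℕ → S => fun k => ω (n + k))) :=
        (lintegral_map hg hshift).symm
    _ = ∫⁻ η, g η ∂ ((((F.P z).restrict B).map (fun ω : ℕ → S => ω n)).bind F.P) := by rw [key]
    _ = ∫⁻ x, ∫⁻ η, g η ∂ F.P x ∂ (((F.P z).restrict B).map (fun ω : ℕ → S => ω n)) :=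
        Measure.lintegral_bind F.meas.aemeasurable hg.aemeasurable
    _ = ∫⁻ ω in B, ∫⁻ η, g η ∂ F.P (ω n) ∂ F.P z :=
        lintegral_map (show Measurable fun x : S => ∫⁻ η, g η ∂ F.P x from
          (Measure.measurable_lintegral hg).comp F.meas) (measurable_pi_apply n)

end FosterAux

/-- **Extension of the Foster criterion with state-dependent step sizes**
(Theorem 1 of Foss–Konstantopoulos, as used in the paper). If `L ≥ 0` is measurable,
`T : 𝒮 → ℕ` is measurable, positive, and grows at most linearly in `L`, the expectations
`E_w L(W^{T(w)})` are uniformly bounded on `D = {L ≤ N}`, and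
`E_w L(W^{T(w)}) - L w ≤ -c T(w)` off `D`, then `D` is positive recurrent. -/
theorem foster_state_dependent_steps
    {S : Type*} [MeasurableSpace S] (F : MarkovFamily S)
    (L : S → ℝ) (hLmeas : Measurable L) (hL0 : ∀ w, 0 ≤ L w)
    (N : ℝ) (hN : 0 < N)
    (T : S → ℕ) (hTmeas : Measurable T) (hT1 : ∀ w, 1 ≤ T w)
    (hTlin : ∃ C : ℝ, ∀ w, (T w : ℝ) ≤ C * max 1 (L w))
    (hint : ∀ w, Integrable (fun ω => L (ω (T w))) (F.P w))
    (hbdd : ∃ C : ℝ, ∀ w, L w ≤ N → ∫ ω, L (ω (T w)) ∂ F.P w ≤ C)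
    (c : ℝ) (hc : 0 < c)
    (hdrift : ∀ w, N < L w → ∫ ω, L (ω (T w)) ∂ F.P w - L w ≤ -c * (T w : ℝ)) :
    PosRec F {w : S | L w ≤ N} := by
  classical
  obtain ⟨Ct, hCt⟩ := hTlin
  obtain ⟨C0, hC0⟩ := hbdd
  set D : Set S := {w : S | L w ≤ N} with hDdef
  set s : ℕ → (ℕ → S) → ℕ := sfun L N T with hs
  set ℓ : S → ℝ≥0∞ := fun x => ENNReal.ofReal (L x) with hℓ
  set d : S → ℝ≥0∞ := fun x => if L x ≤ N then 0 else ENNReal.ofReal (L x) with hd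
  set c' : ℝ≥0∞ := ENNReal.ofReal c with hc'
  set hfn : ℕ → (ℕ → S) → ℝ≥0∞ :=
    fun k ω => c' * (s k ω : ℝ≥0∞) + d (ω (s k ω)) with hhfn
  have hsm : ∀ k, Measurable (s k) := sfun_measurable hLmeas hTmeas
  have hev : ∀ k, Measurable fun ω : ℕ → S => ω (s k ω) :=
    fun k => measurable_eval_comp (hsm k)
  have hdm : Measurable d :=
    Measurable.ite (hLmeas measurableSet_Iic) measurable_const
      (ENNReal.measurable_ofReal.comp hLmeas)
  have hℓm : Measurable ℓ := ENNReal.measurable_ofReal.comp hLmeas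
  have hcast : Measurable fun n : ℕ => (n : ℝ≥0∞) := measurable_from_top
  have hfm : ∀ k, Measurable (hfn k) := fun k =>
    (measurable_const.mul (hcast.comp (hsm k))).add (hdm.comp (hev k))
  have hdle : ∀ x, d x ≤ ℓ x := by
    intro x
    by_cases hx : L x ≤ N <;> simp [hd, hℓ, hx]
  have hlint : ∀ w, ∫⁻ η, ℓ (η (T w)) ∂ F.P w
      = ENNReal.ofReal (∫ ω, L (ω (T w)) ∂ F.P w) := fun w =>
    (MeasureTheory.ofReal_integral_eq_lintegral_ofReal (hint w)
      (Filter.Eventually.of_forall fun _ => hL0 _)).symm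
  have hdrift' : ∀ w, ¬ L w ≤ N →
      c' * (T w : ℝ≥0∞) + ∫⁻ η, ℓ (η (T w)) ∂ F.P w ≤ ℓ w := by
    intro w hw
    have hLw : N < L w := not_le.mp hw
    have hd1 := hdrift w hLw
    have hnn : 0 ≤ ∫ ω, L (ω (T w)) ∂ F.P w := integral_nonneg fun _ => hL0 _
    rw [hlint w]
    have h1 : c * (T w : ℝ) + ∫ ω, L (ω (T w)) ∂ F.P w ≤ L w := by linarith
    calc c' * (T w : ℝ≥0∞) + ENNReal.ofReal (∫ ω, L (ω (T w)) ∂ F.P w)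
        = ENNReal.ofReal (c * (T w : ℝ))
            + ENNReal.ofReal (∫ ω, L (ω (T w)) ∂ F.P w) := by
          rw [hc', ← ENNReal.ofReal_natCast (T w), ← ENNReal.ofReal_mul hc.le]
      _ = ENNReal.ofReal (c * (T w : ℝ) + ∫ ω, L (ω (T w)) ∂ F.P w) :=
          (ENNReal.ofReal_add (by positivity) hnn).symm
      _ ≤ ENNReal.ofReal (L w) := ENNReal.ofReal_le_ofReal h1
  -- the one-step supermartingale inequality
  have hstep : ∀ z k, ∫⁻ ω, hfn (k+1) ω ∂ F.P z ≤ ∫⁻ ω, hfn k ω ∂ F.P z := by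
    intro z k
    set A : Set (ℕ → S) := {ω : ℕ → S | L (ω (s k ω)) ≤ N} with hA
    have hAm : MeasurableSet A := (hev k) (hLmeas measurableSet_Iic)
    set B : ℕ × ℕ → Set (ℕ → S) := fun p =>
      ({ω : ℕ → S | s k ω = p.1} ∩ {ω : ℕ → S | ω p.1 ∈ {x | L x ≤ N}ᶜ})
        ∩ {ω : ℕ → S | ω p.1 ∈ T ⁻¹' {p.2}} with hB
    have hBFn : ∀ p : ℕ × ℕ, MeasurableSet[Fn S p.1] (B p) := fun p =>
      ((sfun_mem_Fn hLmeas hTmeas k p.1).inter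
          (coord_mem_Fn le_rfl (hLmeas measurableSet_Iic).compl)).inter
        (coord_mem_Fn le_rfl (hTmeas (measurableSet_singleton p.2)))
    have hBm : ∀ p, MeasurableSet (B p) := fun p => Fn_le p.1 _ (hBFn p)
    have hcompl : Aᶜ = ⋃ p : ℕ × ℕ, B p := by
      ext ω
      simp only [hA, hB, Set.mem_compl_iff, Set.mem_setOf_eq, Set.mem_iUnion,
        Set.mem_inter_iff, Set.mem_preimage, Set.mem_singleton_iff]
      constructor
      · intro hω
        exact ⟨(s k ω, T (ω (s k ω))), ⟨rfl, hω⟩, rfl⟩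
      · rintro ⟨⟨n, t⟩, ⟨h1, h2⟩, h3⟩
        rw [h1]; exact h2
    have hdisj : Pairwise (Function.onFun Disjoint B) := by
      rintro ⟨n, t⟩ ⟨n', t'⟩ hne
      rw [Function.onFun, Set.disjoint_left]
      rintro ω ⟨⟨h1, h2⟩, h3⟩ ⟨⟨h1', h2'⟩, h3'⟩
      apply hne
      simp only [Set.mem_setOf_eq, Set.mem_preimage, Set.mem_singleton_iff] at h1 h1' h3 h3'
      have hn : n = n' := h1.symm.trans h1'
      subst hn
      have ht : t = t' := h3.symm.trans h3'
      subst ht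
      rfl
    have hpiece : ∀ p : ℕ × ℕ,
        ∫⁻ ω in B p, hfn (k+1) ω ∂ F.P z ≤ ∫⁻ ω in B p, hfn k ω ∂ F.P z := by
      rintro ⟨n, t⟩
      have hgm : Measurable fun η : ℕ → S => ℓ (η t) := hℓm.comp (measurable_pi_apply t)
      have hmk : ∫⁻ ω in B (n, t), ℓ (ω (n + t)) ∂ F.P z
          = ∫⁻ ω in B (n, t), ∫⁻ η, ℓ (η t) ∂ F.P (ω n) ∂ F.P z :=
        markov_lintegral F z n (hBFn (n, t)) hgm
      calc ∫⁻ ω in B (n, t), hfn (k+1) ω ∂ F.P z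
          ≤ ∫⁻ ω in B (n, t), ((c' * (n : ℝ≥0∞) + c' * (t : ℝ≥0∞)) + ℓ (ω (n + t))) ∂ F.P z := by
            refine setLIntegral_mono
              (measurable_const.add (hℓm.comp (measurable_pi_apply (n + t)))) ?_
            rintro ω ⟨⟨h1, h2⟩, h3⟩
            simp only [Set.mem_setOf_eq, Set.mem_preimage, Set.mem_singleton_iff,
              Set.mem_compl_iff] at h1 h2 h3
            have hsk1 : s (k+1) ω = n + t := by
              show (if L (ω (s k ω)) ≤ N then s k ω else s k ω + T (ω (s k ω))) = n + t
              rw [h1, if_neg h2, h3]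
            show c' * ((s (k+1) ω : ℕ) : ℝ≥0∞) + d (ω (s (k+1) ω)) ≤ _
            rw [hsk1, Nat.cast_add, mul_add]
            exact add_le_add_right (hdle _) _
        _ = ∫⁻ ω in B (n, t), (c' * (n : ℝ≥0∞) + c' * (t : ℝ≥0∞)) ∂ F.P z
              + ∫⁻ ω in B (n, t), ℓ (ω (n + t)) ∂ F.P z :=
            lintegral_add_left measurable_const _
        _ = ∫⁻ ω in B (n, t), (c' * (n : ℝ≥0∞) + c' * (t : ℝ≥0∞)) ∂ F.P z
              + ∫⁻ ω in B (n, t), ∫⁻ η, ℓ (η t) ∂ F.P (ω n) ∂ F.P z := by rw [hmk]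
        _ = ∫⁻ ω in B (n, t),
              ((c' * (n : ℝ≥0∞) + c' * (t : ℝ≥0∞)) + ∫⁻ η, ℓ (η t) ∂ F.P (ω n)) ∂ F.P z :=
            (lintegral_add_left measurable_const _).symm
        _ ≤ ∫⁻ ω in B (n, t), hfn k ω ∂ F.P z := by
            refine setLIntegral_mono (hfm k) ?_
            rintro ω ⟨⟨h1, h2⟩, h3⟩
            simp only [Set.mem_setOf_eq, Set.mem_preimage, Set.mem_singleton_iff,
              Set.mem_compl_iff] at h1 h2 h3
            show c' * (n : ℝ≥0∞) + c' * (t : ℝ≥0∞) + ∫⁻ η, ℓ (η t) ∂ F.P (ω n)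
              ≤ c' * ((s k ω : ℕ) : ℝ≥0∞) + d (ω (s k ω))
            have hdn : d (ω n) = ℓ (ω n) := if_neg h2
            rw [h1, hdn, add_assoc]
            refine add_le_add_right ?_ _
            rw [← h3]
            exact hdrift' (ω n) h2
    calc ∫⁻ ω, hfn (k+1) ω ∂ F.P z
        = ∫⁻ ω in A, hfn (k+1) ω ∂ F.P z + ∫⁻ ω in Aᶜ, hfn (k+1) ω ∂ F.P z :=
          (lintegral_add_compl _ hAm).symm
      _ ≤ ∫⁻ ω in A, hfn k ω ∂ F.P z + ∫⁻ ω in Aᶜ, hfn k ω ∂ F.P z := by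
          refine add_le_add (le_of_eq ?_) ?_
          · refine setLIntegral_congr_fun_ae hAm (Filter.Eventually.of_forall fun ω hω => ?_)
            have hsk1 : s (k+1) ω = s k ω := if_pos hω
            show c' * ((s (k+1) ω : ℕ) : ℝ≥0∞) + d (ω (s (k+1) ω)) = _
            rw [hsk1]
          · rw [hcompl, lintegral_iUnion hBm hdisj, lintegral_iUnion hBm hdisj]
            exact ENNReal.tsum_le_tsum hpiece
      _ = ∫⁻ ω, hfn k ω ∂ F.P z := lintegral_add_compl _ hAm
  -- base bound
  have hbase : ∀ z, ∫⁻ ω, hfn 0 ω ∂ F.P z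
      ≤ c' * (T z : ℝ≥0∞) + ENNReal.ofReal (∫ ω, L (ω (T z)) ∂ F.P z) := by
    intro z
    haveI := F.prob z
    have hMz : MeasurableSet {ω : ℕ → S | T (ω 0) = T z} :=
      (hTmeas.comp (measurable_pi_apply 0)) (measurableSet_singleton (T z))
    have h1 : F.P z {ω : ℕ → S | T (ω 0) = T z} = 1 :=
      le_antisymm prob_le_one
        (le_trans (le_of_eq (F.start z).symm)
          (measure_mono fun ω hω => by
            simp only [Set.mem_setOf_eq] at hω ⊢; rw [hω]))
    have hae : ∀ᵐ ω ∂ F.P z, T (ω 0) = T z := by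
      rw [ae_iff]
      have h2 := (prob_compl_eq_zero_iff hMz).mpr h1
      simpa [Set.compl_setOf] using h2
    calc ∫⁻ ω, hfn 0 ω ∂ F.P z
        = ∫⁻ ω, (c' * (T z : ℝ≥0∞) + d (ω (T z))) ∂ F.P z := by
          refine lintegral_congr_ae (hae.mono fun ω hω => ?_)
          show c' * ((s 0 ω : ℕ) : ℝ≥0∞) + d (ω (s 0 ω)) = _
          have hsz : s 0 ω = T z := hω
          rw [hsz]
      _ = c' * (T z : ℝ≥0∞) + ∫⁻ ω, d (ω (T z)) ∂ F.P z := by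
          rw [lintegral_add_left measurable_const, lintegral_const, measure_univ, mul_one]
      _ ≤ c' * (T z : ℝ≥0∞) + ∫⁻ ω, ℓ (ω (T z)) ∂ F.P z :=
          add_le_add_right (lintegral_mono fun ω => hdle _) _
      _ = _ := by rw [hlint z]
  have hchain : ∀ z k, ∫⁻ ω, hfn k ω ∂ F.P z ≤ ∫⁻ ω, hfn 0 ω ∂ F.P z := by
    intro z k
    induction k with
    | zero => exact le_rfl
    | succ k ih => exact (hstep z k).trans ih
  have hc0 : c' ≠ 0 := (ENNReal.ofReal_pos.mpr hc).ne'
  have hctop : c' ≠ ⊤ := ENNReal.ofReal_ne_top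
  have hsucc : ∀ k (ω : ℕ → S), s k ω ≤ s (k+1) ω := by
    intro k ω
    show s k ω ≤ if L (ω (s k ω)) ≤ N then s k ω else s k ω + T (ω (s k ω))
    split <;> omega
  have hkey : ∀ z, ∫⁻ ω, (⨆ k, (s k ω : ℝ≥0∞)) ∂ F.P z
      ≤ c'⁻¹ * (c' * (T z : ℝ≥0∞) + ENNReal.ofReal (∫ ω, L (ω (T z)) ∂ F.P z)) := by
    intro z
    have hmono : Monotone fun k => fun ω : ℕ → S => (s k ω : ℝ≥0∞) :=
      monotone_nat_of_le_succ fun k ω => Nat.cast_le.mpr (hsucc k ω)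
    rw [lintegral_iSup (μ := F.P z) (f := fun k ω => ((s k ω : ℕ) : ℝ≥0∞))
      (fun k => hcast.comp (hsm k)) hmono]
    refine iSup_le fun k => ?_
    have h2 : c' * ∫⁻ ω, ((s k ω : ℕ) : ℝ≥0∞) ∂ F.P z
        ≤ c' * (T z : ℝ≥0∞) + ENNReal.ofReal (∫ ω, L (ω (T z)) ∂ F.P z) := by
      rw [← lintegral_const_mul (f := fun ω => ((s k ω : ℕ) : ℝ≥0∞)) c'
        (hcast.comp (hsm k))]
      refine le_trans (lintegral_mono fun ω => le_self_add)
        ((hchain z k).trans (hbase z))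
    calc ∫⁻ ω, ((s k ω : ℕ) : ℝ≥0∞) ∂ F.P z
        = c'⁻¹ * (c' * ∫⁻ ω, ((s k ω : ℕ) : ℝ≥0∞) ∂ F.P z) := by
          rw [← mul_assoc, ENNReal.inv_mul_cancel hc0 hctop, one_mul]
      _ ≤ _ := mul_le_mul_right h2 _
  have hsup_meas : Measurable fun ω : ℕ → S => ⨆ k, (s k ω : ℝ≥0∞) :=
    Measurable.iSup fun k => hcast.comp (hsm k)
  have hfin : ∀ z, ∫⁻ ω, (⨆ k, (s k ω : ℝ≥0∞)) ∂ F.P z ≠ ⊤ := by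
    intro z
    refine ne_top_of_le_ne_top ?_ (hkey z)
    exact ENNReal.mul_ne_top (ENNReal.inv_ne_top.mpr hc0)
      (ENNReal.add_ne_top.mpr
        ⟨ENNReal.mul_ne_top hctop (ENNReal.natCast_ne_top _), ENNReal.ofReal_ne_top⟩)
  have hit_le : ∀ ω : ℕ → S, hitTime D ω ≤ ⨆ k, (s k ω : ℝ≥0∞) := by
    intro ω
    by_cases htop : (⨆ k, (s k ω : ℝ≥0∞)) = ⊤
    · rw [htop]; exact le_top
    · have h1s : ∀ j, 1 ≤ s j ω := by
        intro j
        induction j with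
        | zero => exact hT1 (ω 0)
        | succ j ih => exact le_trans ih (hsucc j ω)
      have hrep : ∃ k, L (ω (s k ω)) ≤ N := by
        by_contra hcon
        push_neg at hcon
        have hgrow : ∀ k : ℕ, (k : ℕ) + 1 ≤ s k ω := by
          intro k
          induction k with
          | zero => exact hT1 (ω 0)
          | succ k ih =>
            have he : s (k+1) ω = s k ω + T (ω (s k ω)) :=
              if_neg (not_le.mpr (hcon k))
            have h2 := hT1 (ω (s k ω))
            omega
        obtain ⟨m, hm⟩ := ENNReal.exists_nat_gt htop
        have h3 : (m : ℝ≥0∞) ≤ ⨆ k, (s k ω : ℝ≥0∞) :=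
          le_trans (Nat.cast_le.mpr (by have := hgrow m; omega))
            (le_iSup (fun k => ((s k ω : ℕ) : ℝ≥0∞)) m)
        exact absurd h3 (not_le.mpr hm)
      obtain ⟨k, hk⟩ := hrep
      refine le_trans (sInf_le ⟨s k ω, rfl, h1s k, hk⟩)
        (le_iSup (fun k => ((s k ω : ℕ) : ℝ≥0∞)) k)
  constructor
  · -- almost sure finiteness
    intro z
    haveI := F.prob z
    have haef := ae_lt_top hsup_meas (hfin z)
    have hnull : F.P z {ω : ℕ → S | ¬ hitTime D ω < ⊤} = 0 := by
      refine measure_mono_null ?_ (ae_iff.mp haef)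
      intro ω hω
      simp only [Set.mem_setOf_eq, not_lt, top_le_iff] at hω ⊢
      exact top_le_iff.mp (hω ▸ hit_le ω)
    refine le_antisymm prob_le_one ?_
    have hle1 : (1 : ℝ≥0∞) = F.P z Set.univ := measure_univ.symm
    rw [hle1, ← Set.union_compl_self {ω : ℕ → S | hitTime D ω < ⊤}]
    refine le_trans (measure_union_le _ _) ?_
    have : {ω : ℕ → S | hitTime D ω < ⊤}ᶜ = {ω : ℕ → S | ¬ hitTime D ω < ⊤} := by
      rw [Set.compl_setOf]
    rw [this, hnull, add_zero]
  · -- uniform bound on D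
    refine ⟨c'⁻¹ * (c' * ENNReal.ofReal (|Ct| * max 1 N) + ENNReal.ofReal (max C0 0)), ?_, ?_⟩
    · refine ENNReal.mul_lt_top ?_ ?_
      · exact (ENNReal.inv_ne_top.mpr hc0).lt_top
      · exact (ENNReal.add_ne_top.mpr
          ⟨ENNReal.mul_ne_top hctop ENNReal.ofReal_ne_top, ENNReal.ofReal_ne_top⟩).lt_top
    · intro z hz
      have hzD : L z ≤ N := hz
      have hT_bound : (T z : ℝ) ≤ |Ct| * max 1 N := by
        calc (T z : ℝ) ≤ Ct * max 1 (L z) := hCt z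
          _ ≤ |Ct| * max 1 (L z) :=
            mul_le_mul_of_nonneg_right (le_abs_self Ct)
              (le_trans zero_le_one (le_max_left _ _))
          _ ≤ |Ct| * max 1 N :=
            mul_le_mul_of_nonneg_left (max_le_max le_rfl hzD) (abs_nonneg Ct)
      have hInt_bound : ENNReal.ofReal (∫ ω, L (ω (T z)) ∂ F.P z)
          ≤ ENNReal.ofReal (max C0 0) :=
        ENNReal.ofReal_le_ofReal (le_trans (hC0 z hzD) (le_max_left _ _))
      have hTz : (T z : ℝ≥0∞) ≤ ENNReal.ofReal (|Ct| * max 1 N) := by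
        rw [← ENNReal.ofReal_natCast (T z)]
        exact ENNReal.ofReal_le_ofReal hT_bound
      calc ∫⁻ ω, hitTime D ω ∂ F.P z
          ≤ ∫⁻ ω, (⨆ k, (s k ω : ℝ≥0∞)) ∂ F.P z := lintegral_mono hit_le
        _ ≤ c'⁻¹ * (c' * (T z : ℝ≥0∞) + ENNReal.ofReal (∫ ω, L (ω (T z)) ∂ F.P z)) := hkey z
        _ ≤ c'⁻¹ * (c' * ENNReal.ofReal (|Ct| * max 1 N) + ENNReal.ofReal (max C0 0)) :=
            mul_le_mul_right (add_le_add (mul_le_mul_right hTz _) hInt_bound) _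
end
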